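/- Let d, m, n be positive natural numbers. Let A be an m×n row-stochastic real matrix admitting a quantum implementation in dimension d, i.e., there exist d×d complex matrices ρ_1,…,ρ_m (each positive semidefinite with trace 1) and M_1,…,M_n (each positive semidefinite, with M_1+⋯+M_n equal to the identity) such that A_{ij} = Re(tr(ρ_i M_j)) for all i,j. Then λmax(A) := Σ_j max_i A_{ij} ≤ d. -/

import Mathlib

open Matrix BigOperators
open scoped ComplexOrder

/-- A real matrix is row-stochastic if all entries are nonnegative
and each row sums to 1. -/
def RowStochastic {m n : ℕ} (A : Matrix (Fin m) (Fin n) ℝ) : Prop :=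
  (∀ i j, 0 ≤ A i j) ∧ ∀ i, ∑ j, A i j = 1

/-- `A` admits a quantum implementation in dimension `d`: there are states
`ρ i` (PSD, trace one) and POVM effects `M j` (PSD, summing to the identity)
with `A i j = Re (tr (ρ i * M j))`. -/
def QuantumImpl (d m n : ℕ) (A : Matrix (Fin m) (Fin n) ℝ) : Prop :=
  ∃ (ρ : Fin m → Matrix (Fin d) (Fin d) ℂ) (M : Fin n → Matrix (Fin d) (Fin d) ℂ),
    (∀ i, (ρ i).PosSemidef ∧ (ρ i).trace = 1) ∧
    (∀ j, (M j).PosSemidef) ∧ (∑ j, M j = 1) ∧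
    (∀ i j, A i j = ((ρ i * M j).trace).re)

/-- The max monotone `λmax(A) = Σ_j max_i A i j`. -/
noncomputable def lmax {m n : ℕ} (A : Matrix (Fin m) (Fin n) ℝ) : ℝ :=
  ∑ j, ⨆ i, A i j

/-- The min monotone `λmin(A) = −Σ_j min_i A i j`. -/
noncomputable def lmin {m n : ℕ} (A : Matrix (Fin m) (Fin n) ℝ) : ℝ :=
  - ∑ j, ⨅ i, A i j

/-- `UWMaj B A` : `B` is ultraweakly majorized by `A` (i.e. `B ⪯ A`),
meaning `B = L * A * R` for some row-stochastic `L`, `R`. -/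
def UWMaj {m' n' m n : ℕ} (B : Matrix (Fin m') (Fin n') ℝ)
    (A : Matrix (Fin m) (Fin n) ℝ) : Prop :=
  ∃ (L : Matrix (Fin m') (Fin m) ℝ) (R : Matrix (Fin n) (Fin n') ℝ),
    RowStochastic L ∧ RowStochastic R ∧ L * A * R = B


lemma psd_diag {d : ℕ} {M : Matrix (Fin d) (Fin d) ℂ} (hM : M.PosSemidef) (i : Fin d) :
    0 ≤ M i i := by
  have := hM.diag_nonneg (i := i)
  simpa [dotProduct, mulVec, Pi.single_apply, Finset.sum_ite_eq, Finset.sum_ite_eq'] using this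

lemma psd_trace {d : ℕ} {M : Matrix (Fin d) (Fin d) ℂ} (hM : M.PosSemidef) : 0 ≤ M.trace := by
  rw [Matrix.trace]
  exact Finset.sum_nonneg fun i _ => psd_diag hM i

open scoped MatrixOrder in
lemma psd_trace_mul {d : ℕ} {P Q : Matrix (Fin d) (Fin d) ℂ} (hP : P.PosSemidef)
    (hQ : Q.PosSemidef) : 0 ≤ (P * Q).trace := by
  have hB : CFC.sqrt Q * CFC.sqrt Q = Q := CFC.sqrt_mul_sqrt_self Q hQ.nonneg
  have hBH : (CFC.sqrt Q)ᴴ = CFC.sqrt Q := (CFC.sqrt_nonneg Q).posSemidef.1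
  have h2 : (P * Q).trace = (CFC.sqrt Q * P * (CFC.sqrt Q)ᴴ).trace := by
    rw [hBH]
    conv_lhs => rw [← hB]
    rw [← mul_assoc, trace_mul_cycle]
  rw [h2]
  exact psd_trace (hP.mul_mul_conjTranspose_same (CFC.sqrt Q))

lemma conj_mul_self (z : ℂ) : star z * z = ((‖z‖ ^ 2 : ℝ) : ℂ) := by
  rw [Complex.star_def, mul_comm, Complex.mul_conj, Complex.normSq_eq_norm_sq]

open scoped MatrixOrder in
lemma quad_le {d : ℕ} {ρ : Matrix (Fin d) (Fin d) ℂ} (hρ : ρ.PosSemidef) (x : Fin d → ℂ) :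
    star x ⬝ᵥ ρ *ᵥ x ≤ ρ.trace * (star x ⬝ᵥ x) := by
  obtain ⟨B, hB⟩ := CStarAlgebra.nonneg_iff_eq_star_mul_self.mp hρ.nonneg
  rw [star_eq_conjTranspose] at hB
  subst hB
  have h1 : star x ⬝ᵥ (Bᴴ * B) *ᵥ x = ((∑ i, ‖(B *ᵥ x) i‖ ^ 2 : ℝ) : ℂ) := by
    rw [← mulVec_mulVec, dotProduct_mulVec, vecMul_conjTranspose, star_star]
    simp only [dotProduct, Pi.star_apply, conj_mul_self]
    norm_cast
  have h2 : (Bᴴ * B).trace = ((∑ i, ∑ j, ‖B i j‖ ^ 2 : ℝ) : ℂ) := by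
    rw [Matrix.trace, Finset.sum_comm]
    simp only [Matrix.mul_apply, Matrix.diag, conjTranspose_apply, ← Complex.star_def,
      conj_mul_self]
    norm_cast
  have h3 : star x ⬝ᵥ x = ((∑ k, ‖x k‖ ^ 2 : ℝ) : ℂ) := by
    simp only [dotProduct, Pi.star_apply, conj_mul_self]
    norm_cast
  rw [h1, h2, h3, ← Complex.ofReal_mul, Complex.real_le_real]
  calc ∑ i, ‖(B *ᵥ x) i‖ ^ 2
      ≤ ∑ i, (∑ j, ‖B i j‖ ^ 2) * ∑ k, ‖x k‖ ^ 2 := by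
        refine Finset.sum_le_sum fun i _ => ?_
        have hr : ‖(B *ᵥ x) i‖ ≤ ∑ j, ‖B i j‖ * ‖x j‖ := by
          have he : (B *ᵥ x) i = ∑ j, B i j * x j := by simp [mulVec, dotProduct]
          rw [he]
          exact (norm_sum_le _ _).trans (le_of_eq (by simp [norm_mul]))
        calc ‖(B *ᵥ x) i‖ ^ 2 ≤ (∑ j, ‖B i j‖ * ‖x j‖) ^ 2 := by
              exact pow_le_pow_left₀ (norm_nonneg _) hr 2
          _ ≤ (∑ j, ‖B i j‖ ^ 2) * ∑ k, ‖x k‖ ^ 2 :=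
              Finset.sum_mul_sq_le_sq_mul_sq _ _ _
    _ = (∑ i, ∑ j, ‖B i j‖ ^ 2) * ∑ k, ‖x k‖ ^ 2 := by rw [Finset.sum_mul]

lemma one_sub_psd {d : ℕ} {ρ : Matrix (Fin d) (Fin d) ℂ} (hρ : ρ.PosSemidef)
    (htr : ρ.trace = 1) : (1 - ρ).PosSemidef := by
  refine posSemidef_iff_dotProduct_mulVec.mpr ⟨?_, ?_⟩
  · exact Matrix.isHermitian_one.sub hρ.1
  · intro x
    rw [sub_mulVec, dotProduct_sub, one_mulVec, sub_nonneg]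
    have := quad_le hρ x
    rwa [htr, one_mul] at this

/-- if a row-stochastic matrix has a quantum implementation in
dimension `d`, then `λmax(A) ≤ d`. -/
theorem lmax_le_dim (d m n : ℕ) (hd : 0 < d) (hm : 0 < m) (hn : 0 < n)
    (A : Matrix (Fin m) (Fin n) ℝ) (hA : RowStochastic A)
    (hQ : QuantumImpl d m n A) :
    lmax A ≤ d := by
  obtain ⟨ρ, M, hρ, hM, hsum, hAij⟩ := hQ
  haveI : Nonempty (Fin m) := Fin.pos_iff_nonempty.mp hm
  have key : ∀ i j, A i j ≤ ((M j).trace).re := by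
    intro i j
    have h0 : 0 ≤ ((1 - ρ i) * M j).trace :=
      psd_trace_mul (one_sub_psd (hρ i).1 (hρ i).2) (hM j)
    have heq : ((1 - ρ i) * M j).trace = (M j).trace - (ρ i * M j).trace := by
      rw [sub_mul, one_mul, trace_sub]
    rw [heq] at h0
    have := (Complex.le_def.mp h0).1
    simp only [Complex.zero_re, Complex.sub_re] at this
    rw [hAij i j]
    linarith
  have h1 : lmax A ≤ ∑ j, ((M j).trace).re := by
    rw [lmax]
    refine Finset.sum_le_sum fun j _ => ?_
    exact ciSup_le fun i => key i j
  refine h1.trans ?_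
  have h2 : ∑ j, ((M j).trace).re = ((∑ j, M j).trace).re := by
    rw [trace_sum, Complex.re_sum]
  rw [h2, hsum, trace_one]
  simp
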